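/- Over ZMod 2, define 8×8 matrices A_1, A_2, A_3, A_4 whose entries are 1 exactly at the following positions and 0 elsewhere: A_1 at (1,2),(2,1),(4,5),(5,4),(5,6),(6,5); A_2 at (1,2),(2,1),(2,3),(3,2),(5,6),(6,5),(6,7),(7,6); A_3 at (2,3),(3,2),(3,4),(4,3),(6,7),(7,6),(7,8),(8,7); A_4 at (1,7),(7,1),(3,5),(5,3). Let P = I_8 + E_{2,6} + E_{4,8} + E_{5,1} + E_{7,3}, where E_{ij} denotes the matrix with a single 1 in position (i,j). Then each A_i is alternating, P is invertible, each P·A_i is alternating, but there exists no invertible matrix Q over ZMod 2 with Q·A_i·Qᵀ = P·A_i for all i ∈ {1,2,3,4}. -/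

import Mathlib

open Matrix

namespace Stmt16

/-- An alternating square matrix. -/
def IsAltMat {F : Type*} [Ring F] {m : Type*} (A : Matrix m m F) : Prop :=
  Aᵀ = -A ∧ ∀ i, A i i = 0

/-- The four 8×8 matrices `A_1, …, A_4` over `ZMod 2` (entries given by the listed
1-based positions, here written 0-based). -/
def Aex : Fin 4 → Matrix (Fin 8) (Fin 8) (ZMod 2)
  | 0 => fun i j =>
      if ((i : ℕ), (j : ℕ)) ∈ ([(0,1),(1,0),(3,4),(4,3),(4,5),(5,4)] : List (ℕ × ℕ))
      then 1 else 0
  | 1 => fun i j =>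
      if ((i : ℕ), (j : ℕ)) ∈
          ([(0,1),(1,0),(1,2),(2,1),(4,5),(5,4),(5,6),(6,5)] : List (ℕ × ℕ))
      then 1 else 0
  | 2 => fun i j =>
      if ((i : ℕ), (j : ℕ)) ∈
          ([(1,2),(2,1),(2,3),(3,2),(5,6),(6,5),(6,7),(7,6)] : List (ℕ × ℕ))
      then 1 else 0
  | 3 => fun i j =>
      if ((i : ℕ), (j : ℕ)) ∈ ([(0,6),(6,0),(2,4),(4,2)] : List (ℕ × ℕ))
      then 1 else 0

/-- The matrix `P = I₈ + E_{2,6} + E_{4,8} + E_{5,1} + E_{7,3}` (1-based positions,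
here written with 0-based `stdBasisMatrix`). -/
def Pex : Matrix (Fin 8) (Fin 8) (ZMod 2) :=
  1 + Matrix.single 1 5 1 + Matrix.single 3 7 1 +
    Matrix.single 4 0 1 + Matrix.single 6 2 1

/-- Appendix H example: each `A_i` is alternating, `P` is invertible, each `P A_i` is
alternating, but the tuple `(P A_i)` is not simultaneously congruent to `(A_i)`:
simultaneous equivalence of tuples of alternating matrices over `ZMod 2` is strictly
more powerful than simultaneous congruence. -/
theorem equivalence_stronger_than_congruence :
    (∀ i, IsAltMat (Aex i)) ∧ IsUnit Pex ∧ (∀ i, IsAltMat (Pex * Aex i)) ∧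
      ¬ ∃ Q : Matrix (Fin 8) (Fin 8) (ZMod 2), IsUnit Q ∧
          ∀ i, Q * Aex i * Qᵀ = Pex * Aex i := by
  refine ⟨fun i => by fin_cases i <;> exact ⟨by decide, by decide⟩,
    isUnit_iff_exists.mpr ⟨Pex, by decide, by decide⟩,
    fun i => by fin_cases i <;> exact ⟨by decide, by decide⟩, ?_⟩
  rintro ⟨Q, hQ, h⟩
  obtain ⟨B, hB, hB'⟩ := isUnit_iff_exists.mp hQ
  have cancel : ∀ x : Fin 8 → ZMod 2, Q *ᵥ x = 0 → x = 0 := by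
    intro x hx
    have hh : B *ᵥ (Q *ᵥ x) = x := by rw [Matrix.mulVec_mulVec, hB', Matrix.one_mulVec]
    rw [hx, Matrix.mulVec_zero] at hh; exact hh.symm
  have cancelT : ∀ x : Fin 8 → ZMod 2, x ᵥ* Qᵀ = 0 → x = 0 := by
    intro x hx
    have hh : (x ᵥ* Qᵀ) ᵥ* Bᵀ = x := by
      rw [Matrix.vecMul_vecMul, ← Matrix.transpose_mul, hB', Matrix.transpose_one, Matrix.vecMul_one]
    rw [hx, Matrix.zero_vecMul] at hh; exact hh.symm
  have hm0 : Q * Aex 3 * Qᵀ = Pex * Aex 3 := h 3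
  have hm1 : Q * Aex 2 * Qᵀ = Pex * Aex 2 := h 2
  set M2 : Matrix (Fin 8) (Fin 8) (ZMod 2) := (fun i j => if ((i:ℕ),(j:ℕ)) ∈ ([(0,6),(1,2),(2,1),(2,3),(2,4),(3,2),(4,2),(5,6),(6,0),(6,5),(6,7),(7,6)] : List (ℕ × ℕ)) then 1 else 0) with hd2
  have he2 : M2 = Aex 2 + Aex 3 := by rw [hd2]; ext i j; fin_cases i <;> fin_cases j <;> decide
  have hm2 : Q * M2 * Qᵀ = Pex * M2 := by
    rw [he2]; simp only [Matrix.mul_add, Matrix.add_mul, h 2, h 3]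
  have hm3 : Q * Aex 1 * Qᵀ = Pex * Aex 1 := h 1
  set M4 : Matrix (Fin 8) (Fin 8) (ZMod 2) := (fun i j => if ((i:ℕ),(j:ℕ)) ∈ ([(0,1),(0,6),(1,0),(1,2),(2,1),(2,4),(4,2),(4,5),(5,4),(5,6),(6,0),(6,5)] : List (ℕ × ℕ)) then 1 else 0) with hd4
  have he4 : M4 = Aex 1 + Aex 3 := by rw [hd4]; ext i j; fin_cases i <;> fin_cases j <;> decide
  have hm4 : Q * M4 * Qᵀ = Pex * M4 := by
    rw [he4]; simp only [Matrix.mul_add, Matrix.add_mul, h 1, h 3]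
  have hm5 : Q * Aex 0 * Qᵀ = Pex * Aex 0 := h 0
  have hv1 : Aex 3 *ᵥ (Qᵀ *ᵥ (fun r : Fin 8 => if (r:ℕ) ∈ ([1] : List ℕ) then (1:ZMod 2) else 0)) = 0 := by
    apply cancel
    rw [Matrix.mulVec_mulVec, Matrix.mulVec_mulVec, hm0]
    decide
  have l0 : Q 1 6 = 0 := by
    have e0 := congrFun hv1 0
    simp (config := { decide := true }) [Matrix.mulVec, dotProduct, Fin.sum_univ_eight, Matrix.transpose_apply, Aex] at e0
    linear_combination e0
  have l1 : Q 1 4 = 0 := by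
    have e0 := congrFun hv1 2
    simp (config := { decide := true }) [Matrix.mulVec, dotProduct, Fin.sum_univ_eight, Matrix.transpose_apply, Aex] at e0
    linear_combination e0
  have l2 : Q 1 2 = 0 := by
    have e0 := congrFun hv1 4
    simp (config := { decide := true }) [Matrix.mulVec, dotProduct, Fin.sum_univ_eight, Matrix.transpose_apply, Aex] at e0
    linear_combination e0
  have l3 : Q 1 0 = 0 := by
    have e0 := congrFun hv1 6
    simp (config := { decide := true }) [Matrix.mulVec, dotProduct, Fin.sum_univ_eight, Matrix.transpose_apply, Aex] at e0
    linear_combination e0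
  have hv2 : Aex 2 *ᵥ (Qᵀ *ᵥ (fun r : Fin 8 => if (r:ℕ) ∈ ([4] : List ℕ) then (1:ZMod 2) else 0)) = 0 := by
    apply cancel
    rw [Matrix.mulVec_mulVec, Matrix.mulVec_mulVec, hm1]
    decide
  have l23 : Q 4 1 + Q 4 3 = 0 := by
    have e0 := congrFun hv2 2
    simp (config := { decide := true }) [Matrix.mulVec, dotProduct, Fin.sum_univ_eight, Matrix.transpose_apply, Aex] at e0
    linear_combination e0
  have hv3 : M2 *ᵥ (Qᵀ *ᵥ (fun r : Fin 8 => if (r:ℕ) ∈ ([1,4] : List ℕ) then (1:ZMod 2) else 0)) = 0 := by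
    apply cancel
    rw [Matrix.mulVec_mulVec, Matrix.mulVec_mulVec, hm2]
    decide
  have l28 : Q 1 1 + Q 1 3 + Q 1 4 + Q 4 1 + Q 4 3 + Q 4 4 = 0 := by
    have e0 := congrFun hv3 2
    simp (config := { decide := true }) [Matrix.mulVec, dotProduct, Fin.sum_univ_eight, Matrix.transpose_apply, Aex, hd2] at e0
    linear_combination e0
  have hv4 : Aex 1 *ᵥ (Qᵀ *ᵥ (fun r : Fin 8 => if (r:ℕ) ∈ ([4,6] : List ℕ) then (1:ZMod 2) else 0)) = 0 := by
    apply cancel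
    rw [Matrix.mulVec_mulVec, Matrix.mulVec_mulVec, hm3]
    decide
  have l38 : Q 4 1 + Q 6 1 = 0 := by
    have e0 := congrFun hv4 0
    simp (config := { decide := true }) [Matrix.mulVec, dotProduct, Fin.sum_univ_eight, Matrix.transpose_apply, Aex] at e0
    linear_combination e0
  have l39 : Q 4 0 + Q 4 2 + Q 6 0 + Q 6 2 = 0 := by
    have e0 := congrFun hv4 1
    simp (config := { decide := true }) [Matrix.mulVec, dotProduct, Fin.sum_univ_eight, Matrix.transpose_apply, Aex] at e0
    linear_combination e0
  have l40 : Q 4 5 + Q 6 5 = 0 := by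
    have e0 := congrFun hv4 4
    simp (config := { decide := true }) [Matrix.mulVec, dotProduct, Fin.sum_univ_eight, Matrix.transpose_apply, Aex] at e0
    linear_combination e0
  have l41 : Q 4 4 + Q 4 6 + Q 6 4 + Q 6 6 = 0 := by
    have e0 := congrFun hv4 5
    simp (config := { decide := true }) [Matrix.mulVec, dotProduct, Fin.sum_univ_eight, Matrix.transpose_apply, Aex] at e0
    linear_combination e0
  have hv5 : M4 *ᵥ (Qᵀ *ᵥ (fun r : Fin 8 => if (r:ℕ) ∈ ([1,4,6] : List ℕ) then (1:ZMod 2) else 0)) = 0 := by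
    apply cancel
    rw [Matrix.mulVec_mulVec, Matrix.mulVec_mulVec, hm4]
    decide
  have l46 : Q 1 1 + Q 1 6 + Q 4 1 + Q 4 6 + Q 6 1 + Q 6 6 = 0 := by
    have e0 := congrFun hv5 0
    simp (config := { decide := true }) [Matrix.mulVec, dotProduct, Fin.sum_univ_eight, Matrix.transpose_apply, Aex, hd4] at e0
    linear_combination e0
  have l47 : Q 1 2 + Q 1 5 + Q 4 2 + Q 4 5 + Q 6 2 + Q 6 5 = 0 := by
    have e0 := congrFun hv5 4
    simp (config := { decide := true }) [Matrix.mulVec, dotProduct, Fin.sum_univ_eight, Matrix.transpose_apply, Aex, hd4] at e0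
    linear_combination e0
  have hv6 : Aex 0 *ᵥ (Qᵀ *ᵥ (fun r : Fin 8 => if (r:ℕ) ∈ ([6] : List ℕ) then (1:ZMod 2) else 0)) = 0 := by
    apply cancel
    rw [Matrix.mulVec_mulVec, Matrix.mulVec_mulVec, hm5]
    decide
  have l54 : Q 6 1 = 0 := by
    have e0 := congrFun hv6 0
    simp (config := { decide := true }) [Matrix.mulVec, dotProduct, Fin.sum_univ_eight, Matrix.transpose_apply, Aex] at e0
    linear_combination e0
  have l55 : Q 6 0 = 0 := by
    have e0 := congrFun hv6 1
    simp (config := { decide := true }) [Matrix.mulVec, dotProduct, Fin.sum_univ_eight, Matrix.transpose_apply, Aex] at e0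
    linear_combination e0
  have l56 : Q 6 4 = 0 := by
    have e0 := congrFun hv6 3
    simp (config := { decide := true }) [Matrix.mulVec, dotProduct, Fin.sum_univ_eight, Matrix.transpose_apply, Aex] at e0
    linear_combination e0
  have e : Q 1 0 * Q 4 1 + Q 1 1 * Q 4 0 + Q 1 3 * Q 4 4 + Q 1 4 * Q 4 3 + Q 1 4 * Q 4 5 + Q 1 5 * Q 4 4 = 1 := by
    have e0 := congrFun (congrFun (h 0) 1) 4
    rw [Matrix.mul_apply, Fin.sum_univ_eight] at e0
    simp only [Matrix.mul_apply] at e0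
    simp (config := { decide := true }) [Matrix.mul_apply, Fin.sum_univ_eight, Aex, Pex, Matrix.transpose_apply, Matrix.one_apply, Matrix.single, Matrix.add_apply] at e0
    linear_combination e0
  have h2 : (2:ZMod 2) = 0 := by decide
  exact one_ne_zero (by linear_combination e + (Q 1 5 + Q 4 4) * l0 + (Q 4 4 + Q 4 5) * l1 + (Q 1 1) * l2 + (Q 4 1) * l3 + (Q 1 4 + Q 4 4) * l23 + (Q 4 4) * l28 + (Q 1 4 + Q 1 5 + Q 4 4) * l38 + (Q 1 1) * l39 + (Q 1 1) * l40 + (Q 1 5 + Q 4 4) * l41 + (Q 1 5 + Q 4 4) * l46 + (Q 1 1) * l47 + (Q 1 4) * l54 + (Q 1 1) * l55 + (Q 1 5 + Q 4 4) * l56 + ((1) + (-1) * Q 1 0 * Q 4 1 + (-1) * Q 1 1 * Q 1 2 + (-1) * Q 1 1 * Q 1 5 + (-1) * Q 1 1 * Q 4 0 + (-1) * Q 1 1 * Q 4 2 + (-1) * Q 1 1 * Q 4 4 + (-1) * Q 1 1 * Q 4 5 + (-1) * Q 1 1 * Q 6 0 + (-1) * Q 1 1 * Q 6 2 + (-1)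 * Q 1 1 * Q 6 5 + (-1) * Q 1 3 * Q 4 4 + (-1) * Q 1 4 * Q 4 1 + (-1) * Q 1 4 * Q 4 3 + (-1) * Q 1 4 * Q 4 4 + (-1) * Q 1 4 * Q 4 5 + (-1) * Q 1 4 * Q 6 1 + (-1) * Q 1 5 * Q 1 6 + (-1) * Q 1 5 * Q 4 1 + (-1) * Q 1 5 * Q 4 4 + (-1) * Q 1 5 * Q 4 6 + (-1) * Q 1 5 * Q 6 1 + (-1) * Q 1 5 * Q 6 4 + (-1) * Q 1 5 * Q 6 6 + (-1) * Q 1 6 * Q 4 4 + (-2) * Q 4 1 * Q 4 4 + (-1) * Q 4 3 * Q 4 4 + (-1) * Q 4 4 * Q 4 4 + (-1) * Q 4 4 * Q 4 6 + (-1) * Q 4 4 * Q 6 1 + (-1) * Q 4 4 * Q 6 4 + (-1) * Q 4 4 * Q 6 6) * h2 : (1:ZMod 2) = 0)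

end Stmt16
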